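/- Let G be a finite connected simple graph on V ≥ 2 vertices with edge connectivity η, and suppose G is not a complete graph. Then the spectral gap of the Laplacian matrix satisfies the tighter bound γ_1(G) ≤ η. -/

import Mathlib

open scoped Classical
open Real Finset

/-- The eigenvalues of a Hermitian matrix, listed with multiplicity in increasing order. -/
noncomputable def sortedEigenvalues {n : ℕ} (A : Matrix (Fin n) (Fin n) ℝ) : Fin n → ℝ :=
  if h : A.IsHermitian then h.eigenvalues ∘ ⇑(Tuple.sort h.eigenvalues) else fun _ => 0

/-- The edge connectivity of a graph: the smallest number of edges whose deletion
disconnects the graph. -/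
noncomputable def edgeConnectivity {V : Type*} [Fintype V] (G : SimpleGraph V) : ℕ :=
  sInf {k | ∃ s : Finset (Sym2 V), ↑s ⊆ G.edgeSet ∧ s.card = k ∧
    ¬ (G.deleteEdges ↑s).Connected}

open Matrix



lemma key {n : ℕ} (hn : 2 ≤ n) (G : SimpleGraph (Fin n)) (hG : G.Preconnected)
    (x : Fin n → ℝ) (hsum : ∑ v, x v = 0) :
    sortedEigenvalues (G.lapMatrix ℝ) ⟨1, Nat.lt_of_lt_of_le one_lt_two hn⟩ * (x ⬝ᵥ x) ≤
      x ⬝ᵥ (G.lapMatrix ℝ) *ᵥ x := by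
  classical
  set L := G.lapMatrix ℝ with hLdef
  have hpsd : L.PosSemidef := G.posSemidef_lapMatrix ℝ
  have h : L.IsHermitian := hpsd.1
  set μ : Fin n → ℝ := h.eigenvalues with hμdef
  set b := h.eigenvectorBasis with hbdef
  set w : Fin n → (Fin n → ℝ) := fun i => ⇑(b i) with hwdef
  have hmul : ∀ i, L *ᵥ w i = μ i • w i := fun i => h.mulVec_eigenvectorBasis i
  set c : Fin n → ℝ := fun i => w i ⬝ᵥ x with hcdef
  set E : (Fin n → ℝ) → EuclideanSpace ℝ (Fin n) := (fun u => WithLp.toLp 2 u) with hEdef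
  have hinner : ∀ u v : Fin n → ℝ,
      (inner (𝕜 := ℝ) (E u) (E v)) = u ⬝ᵥ v := by
    intro u v
    simp [PiLp.inner_apply, dotProduct, hEdef, mul_comm]
  have hxx : x ⬝ᵥ x = ∑ i, c i ^ 2 := by
    have := b.sum_inner_mul_inner (E x) (E x)
    rw [hinner] at this
    rw [← this]
    refine Finset.sum_congr rfl fun i _ => ?_
    have h1 : (inner (𝕜 := ℝ) (b i) (E x)) = c i := hinner (w i) x
    have h2 : (inner (𝕜 := ℝ) (E x) (b i)) = c i := by
      rw [real_inner_comm]; exact h1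
    rw [h1, h2, sq]
  have hsymm : Lᵀ = L := G.isSymm_lapMatrix (R := ℝ)
  have hwLx : ∀ i, w i ⬝ᵥ (L *ᵥ x) = μ i * c i := by
    intro i
    rw [Matrix.dotProduct_mulVec, ← Matrix.mulVec_transpose, hsymm, hmul i,
      smul_dotProduct, smul_eq_mul]
  have hQx : x ⬝ᵥ L *ᵥ x = ∑ i, μ i * c i ^ 2 := by
    have := b.sum_inner_mul_inner (E x) (E (L *ᵥ x))
    rw [hinner] at this
    rw [← this]
    refine Finset.sum_congr rfl fun i _ => ?_
    have h1 : (inner (𝕜 := ℝ) (b i) (E (L *ᵥ x))) = μ i * c i := by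
      have := hinner (w i) (L *ᵥ x)
      rw [hwLx i] at this
      exact this
    have h2 : (inner (𝕜 := ℝ) (E x) (b i)) = c i := by
      rw [real_inner_comm]; exact hinner (w i) x
    rw [h1, h2]; ring
  have hker : ∀ i, μ i = 0 → c i = 0 := by
    intro i h0
    have hz : Matrix.toLin' L (w i) = 0 := by
      rw [Matrix.toLin'_apply, hmul i, h0, zero_smul]
    have hconst := (G.lapMatrix_mulVec_eq_zero_iff_forall_reachable (x := w i)).mp (by rwa [Matrix.toLin'_apply] at hz)
    set v0 : Fin n := ⟨0, by omega⟩ with hv0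
    have hcc : ∀ v, w i v = w i v0 := fun v => hconst v v0 (hG v v0)
    have : c i = ∑ v, w i v0 * x v := by
      rw [hcdef]; simp only [dotProduct]
      exact Finset.sum_congr rfl fun v _ => by rw [hcc v]
    rw [this, ← Finset.mul_sum, hsum, mul_zero]
  have hdet : L.det = 0 := by
    rw [← Matrix.exists_mulVec_eq_zero_iff]
    refine ⟨fun _ => 1, ?_, G.lapMatrix_mulVec_const_eq_zero⟩
    intro hcon
    exact one_ne_zero (congrFun hcon ⟨0, by omega⟩)
  have hex : ∃ i0, μ i0 = 0 := by
    have := h.det_eq_prod_eigenvalues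
    rw [hdet] at this
    obtain ⟨i0, _, hi0⟩ := Finset.prod_eq_zero_iff.mp this.symm
    exact ⟨i0, hi0⟩
  set σ := Tuple.sort μ with hσdef
  have hmono : Monotone (μ ∘ σ) := Tuple.monotone_sort μ
  set z : Fin n := ⟨0, by omega⟩ with hz
  have hminle : ∀ i, μ (σ z) ≤ μ i := by
    intro i
    have hle : z ≤ σ.symm i := by rw [Fin.le_def]; exact Nat.zero_le _
    have : (μ ∘ σ) z ≤ (μ ∘ σ) (σ.symm i) := hmono hle
    simpa using this
  have hmin0 : μ (σ z) = 0 := by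
    obtain ⟨i0, hi0⟩ := hex
    exact le_antisymm (hi0 ▸ hminle i0) (hpsd.eigenvalues_nonneg _)
  have hge : ∀ i, μ i ≠ 0 → μ (σ ⟨1, by omega⟩) ≤ μ i := by
    intro i hi
    have hk : σ.symm i ≠ z := by
      intro e
      apply hi
      rw [← Equiv.apply_symm_apply σ i, e, hmin0]
    have hv : (σ.symm i).val ≠ 0 := by
      intro hv0; exact hk (Fin.ext (by simp [hz, hv0]))
    have h1k : (⟨1, by omega⟩ : Fin n) ≤ σ.symm i := by
      rw [Fin.le_def, Fin.val_mk]
      omega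
    have := hmono h1k
    simpa using this
  have hunfold : sortedEigenvalues L ⟨1, by omega⟩ = μ (σ ⟨1, by omega⟩) := by
    rw [sortedEigenvalues, dif_pos h]
    rfl
  rw [hunfold, hxx, hQx, Finset.mul_sum]
  refine Finset.sum_le_sum fun i _ => ?_
  by_cases h0 : μ i = 0
  · rw [hker i h0, h0]; simp
  · exact mul_le_mul_of_nonneg_right (hge i h0) (sq_nonneg _)



set_option maxHeartbeats 1000000 in
lemma partition_bound {n : ℕ} (hn : 2 ≤ n) (G : SimpleGraph (Fin n)) (hG : G.Preconnected)
    (A B : Finset (Fin n)) (hA : A.Nonempty) (hB : B.Nonempty) (hd : Disjoint A B)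
    (hadj : ∀ a ∈ A, ∀ b ∈ B, ¬ G.Adj a b) :
    sortedEigenvalues (G.lapMatrix ℝ) ⟨1, Nat.lt_of_lt_of_le one_lt_two hn⟩ ≤ (((A ∪ B)ᶜ).card : ℝ) := by
  classical
  set S : Finset (Fin n) := (A ∪ B)ᶜ with hSdef
  set a : ℝ := (A.card : ℝ) with hadef
  set bb : ℝ := (B.card : ℝ) with hbdef
  have ha0 : (0:ℝ) ≤ a := Nat.cast_nonneg _
  have hb0 : (0:ℝ) ≤ bb := Nat.cast_nonneg _
  have ha1 : (1:ℝ) ≤ a := by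
    rw [hadef]; exact_mod_cast Finset.card_pos.mpr hA
  have hb1 : (1:ℝ) ≤ bb := by
    rw [hbdef]; exact_mod_cast Finset.card_pos.mpr hB
  set s : ℝ := (S.card : ℝ) with hsdef
  set x : Fin n → ℝ := fun v => if v ∈ A then bb else if v ∈ B then -a else 0 with hxdef
  have hBsub : B ⊆ Aᶜ := by
    intro v hv
    rw [Finset.mem_compl]
    exact fun hvA => Finset.disjoint_left.mp hd hvA hv
  have hxA : ∀ v ∈ A, x v = bb := fun v hv => by simp [hxdef, hv]
  have hxB : ∀ v ∈ B, x v = -a := fun v hv => by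
    have : v ∉ A := Finset.mem_compl.mp (hBsub hv)
    simp [hxdef, hv, this]
  have hxS : ∀ v, v ∉ A → v ∉ B → x v = 0 := fun v h1 h2 => by simp [hxdef, h1, h2]
  have eA : ∑ v ∈ A, x v = a * bb := by
    rw [Finset.sum_congr rfl hxA, Finset.sum_const, nsmul_eq_mul, hadef]
  have eB : ∑ v ∈ B, x v = bb * (-a) := by
    rw [Finset.sum_congr rfl hxB, Finset.sum_const, nsmul_eq_mul, hbdef]
  have eR : ∑ v ∈ Aᶜ \ B, x v = 0 := Finset.sum_eq_zero fun v hv =>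
    hxS v (Finset.mem_compl.mp (Finset.mem_sdiff.mp hv).1) (Finset.mem_sdiff.mp hv).2
  have hsum : ∑ v, x v = 0 := by
    rw [← Finset.sum_add_sum_compl A, ← Finset.sum_sdiff hBsub, eA, eB, eR]
    ring
  have hN : x ⬝ᵥ x = a * bb^2 + bb * a^2 := by
    have : ∀ v, x v * x v = (if v ∈ A then bb^2 else 0) + (if v ∈ B then a^2 else 0) := by
      intro v
      by_cases h1 : v ∈ A
      · have : v ∉ B := fun h2 => Finset.disjoint_left.mp hd h1 h2
        simp [hxA v h1, this, h1, sq]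
      · by_cases h2 : v ∈ B
        · simp [hxB v h2, h1, h2, sq]
        · simp [hxS v h1 h2, h1, h2]
    rw [dotProduct, Finset.sum_congr rfl (fun v _ => this v), Finset.sum_add_distrib,
      Finset.sum_ite_mem, Finset.sum_ite_mem]
    simp [hadef, hbdef, mul_comm]
  have hNpos : 0 < x ⬝ᵥ x := by rw [hN]; nlinarith
  -- the quadratic form bound
  set F : Fin n → ℝ := fun v => (if v ∈ A then bb^2 else 0) + (if v ∈ B then a^2 else 0) with hFdef
  set χ : Fin n → ℝ := fun v => if v ∈ S then 1 else 0 with hχdef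
  have hQform : x ⬝ᵥ (G.lapMatrix ℝ) *ᵥ x =
      (∑ i, ∑ j, if G.Adj i j then (x i - x j)^2 else 0) / 2 := by
    rw [← Matrix.toLinearMap₂'_apply', SimpleGraph.lapMatrix_toLinearMap₂']
  have hχ0 : ∀ v, 0 ≤ χ v := by
    intro v; rw [hχdef]; dsimp only; split_ifs <;> norm_num
  have hF0 : ∀ v, 0 ≤ F v := by
    intro v; rw [hFdef]; dsimp only; split_ifs <;> nlinarith [sq_nonneg a, sq_nonneg bb]
  have hFA : ∀ v ∈ A, F v = bb^2 := by
    intro v hv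
    have hvB : v ∉ B := fun h => Finset.disjoint_left.mp hd hv h
    rw [hFdef]; simp [hv, hvB]
  have hFB : ∀ v ∈ B, F v = a^2 := by
    intro v hv
    have hvA : v ∉ A := fun h => Finset.disjoint_left.mp hd h hv
    rw [hFdef]; simp [hv, hvA]
  have hχ1 : ∀ v, v ∉ A → v ∉ B → χ v = 1 := by
    intro v h1 h2
    have : v ∈ S := by rw [hSdef, Finset.mem_compl, Finset.mem_union]; exact fun h => h.elim h1 h2
    rw [hχdef]; simp [this]
  clear_value S a bb s x F χ
  have key2 : ∀ i j, G.Adj i j → (x i - x j)^2 ≤ χ i * F j + χ j * F i := by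
    intro i j hij
    have r1 : 0 ≤ χ i * F j := mul_nonneg (hχ0 i) (hF0 j)
    have r2 : 0 ≤ χ j * F i := mul_nonneg (hχ0 j) (hF0 i)
    by_cases hiA : i ∈ A
    · by_cases hjA : j ∈ A
      · rw [hxA i hiA, hxA j hjA]; nlinarith
      · by_cases hjB : j ∈ B
        · exact absurd hij (hadj _ hiA _ hjB)
        · rw [hxA i hiA, hxS j hjA hjB, hχ1 j hjA hjB, hFA i hiA]; nlinarith
    · by_cases hiB : i ∈ B
      · by_cases hjB : j ∈ B
        · rw [hxB i hiB, hxB j hjB]; nlinarith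
        · by_cases hjA : j ∈ A
          · exact absurd hij.symm (hadj _ hjA _ hiB)
          · rw [hxB i hiB, hxS j hjA hjB, hχ1 j hjA hjB, hFB i hiB]; nlinarith
      · rw [hxS i hiA hiB, hχ1 i hiA hiB]
        by_cases hjA : j ∈ A
        · rw [hxA j hjA, hFA j hjA]; nlinarith
        · by_cases hjB : j ∈ B
          · rw [hxB j hjB, hFB j hjB]; nlinarith
          · rw [hxS j hjA hjB]; have h3 := hF0 j; nlinarith [r2, h3]
  have hpoint : ∀ i j, (if G.Adj i j then (x i - x j)^2 else 0) ≤ χ i * F j + χ j * F i := by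
    intro i j
    by_cases hij : G.Adj i j
    · rw [if_pos hij]; exact key2 i j hij
    · rw [if_neg hij]
      have r1 : 0 ≤ χ i * F j := mul_nonneg (hχ0 i) (hF0 j)
      have r2 : 0 ≤ χ j * F i := mul_nonneg (hχ0 j) (hF0 i)
      linarith
  have hχsum : ∑ v, χ v = s := by
    rw [hχdef]; simp only [Finset.sum_ite_mem, Finset.univ_inter, Finset.sum_const]
    simp [hsdef]
  have hFsum : ∑ v, F v = a * bb^2 + bb * a^2 := by
    rw [hFdef]
    rw [Finset.sum_add_distrib, Finset.sum_ite_mem, Finset.sum_ite_mem]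
    simp [hadef, hbdef, mul_comm]
  have hQbound : x ⬝ᵥ (G.lapMatrix ℝ) *ᵥ x ≤ s * (x ⬝ᵥ x) := by
    rw [hQform]
    have h1 : (∑ i, ∑ j, if G.Adj i j then (x i - x j)^2 else 0) ≤
        ∑ i, ∑ j, (χ i * F j + χ j * F i) :=
      Finset.sum_le_sum fun i _ => Finset.sum_le_sum fun j _ => hpoint i j
    have h2 : ∑ i, ∑ j, (χ i * F j + χ j * F i) = 2 * (s * (a * bb^2 + bb * a^2)) := by
      rw [Finset.sum_congr rfl fun i (_ : i ∈ univ) => Finset.sum_add_distrib]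
      rw [Finset.sum_add_distrib]
      have e1 : ∑ i, ∑ j, χ i * F j = s * (a * bb^2 + bb * a^2) := by
        rw [← hχsum, ← hFsum, Finset.sum_mul_sum]
      have e2 : ∑ i, ∑ j, χ j * F i = s * (a * bb^2 + bb * a^2) := by
        rw [Finset.sum_comm, ← hχsum, ← hFsum, Finset.sum_mul_sum]
      rw [e1, e2]; ring
    rw [hN]
    calc (∑ i, ∑ j, if G.Adj i j then (x i - x j)^2 else 0) / 2
        ≤ (2 * (s * (a * bb^2 + bb * a^2))) / 2 := by
          apply div_le_div_of_nonneg_right ?_ (by norm_num)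
          · exact le_of_le_of_eq h1 h2
      _ = s * (a * bb^2 + bb * a^2) := by ring
  have hkey := key hn G hG x hsum
  have : sortedEigenvalues (G.lapMatrix ℝ) ⟨1, by omega⟩ * (x ⬝ᵥ x) ≤ s * (x ⬝ᵥ x) :=
    le_trans hkey hQbound
  exact le_of_mul_le_mul_right this hNpos



lemma cross_walk {n : ℕ} {H : SimpleGraph (Fin n)} {X : Fin n → Prop} {p q : Fin n}
    (w : H.Walk p q) (hp : X p) (hq : ¬ X q) : ∃ a b, H.Adj a b ∧ X a ∧ ¬ X b := by
  induction w with
  | nil => exact absurd hp hq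
  | @cons p m q h w ih =>
    by_cases hm : X m
    · exact ih hm hq
    · exact ⟨p, m, h, hp, hm⟩

lemma no_S_walk {n : ℕ} {H : SimpleGraph (Fin n)} {S : Finset (Fin n)}
    (hH : ∀ a b, H.Adj a b → b ∉ S) {p q : Fin n} (w : H.Walk p q) : q ∉ S ∨ q = p := by
  induction w with
  | nil => exact Or.inr rfl
  | @cons p m q h w ih =>
    rcases ih with h1 | h2
    · exact Or.inl h1
    · exact Or.inl (h2 ▸ hH p m h)

theorem fiedler_upper_bound_noncomplete {V : ℕ} (hV : 2 ≤ V) (G : SimpleGraph (Fin V))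
    (hG : G.Connected) (hnc : G ≠ ⊤) :
    sortedEigenvalues (G.lapMatrix ℝ) ⟨1, by omega⟩ ≤ (edgeConnectivity G : ℝ) := by
  classical
  have hnt : Nontrivial (Fin V) := ⟨⟨⟨0, by omega⟩, ⟨1, by omega⟩, by simp⟩⟩
  -- the defining set of the edge connectivity is nonempty
  have hne : {k | ∃ s : Finset (Sym2 (Fin V)), ↑s ⊆ G.edgeSet ∧ s.card = k ∧
      ¬ (G.deleteEdges ↑s).Connected}.Nonempty := by
    refine ⟨G.edgeFinset.card, G.edgeFinset, by simp [SimpleGraph.edgeFinset], rfl, ?_⟩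
    have : G.deleteEdges ↑G.edgeFinset = ⊥ := by
      rw [SimpleGraph.coe_edgeFinset, SimpleGraph.deleteEdges_edgeSet, sdiff_self]
    rw [this]
    exact SimpleGraph.not_connected_bot
  have hmem := Nat.sInf_mem hne
  obtain ⟨F, hFsub, hFcard, hFdis⟩ := hmem
  set η := edgeConnectivity G with hηdef
  have hFcard' : F.card = η := by rw [hηdef, edgeConnectivity]; exact hFcard
  -- the split given by the disconnected graph
  have hnp : ¬ (G.deleteEdges ↑F).Preconnected := by
    intro h
    exact hFdis ((SimpleGraph.connected_iff _).mpr ⟨h, ⟨⟨0, by omega⟩⟩⟩)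
  rw [SimpleGraph.Preconnected] at hnp
  push_neg at hnp
  obtain ⟨u, w0, huw⟩ := hnp
  set X : Fin V → Prop := fun v => (G.deleteEdges ↑F).Reachable u v with hXdef
  have hXu : X u := SimpleGraph.Reachable.refl u
  have hXw : ¬ X w0 := huw
  have hcross : ∀ a b, G.Adj a b → X a → ¬ X b → s(a, b) ∈ F := by
    intro a b hab hXa hXb
    by_contra hmem
    exact hXb (hXa.trans (SimpleGraph.Adj.reachable
      (SimpleGraph.deleteEdges_adj.mpr ⟨hab, by simpa using hmem⟩)))
  by_cases hall : ∀ a b, X a → ¬ X b → G.Adj a b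
  · -- every X–Y pair adjacent: η is large, use a non-edge of G
    have hpq : ∃ p q : Fin V, p ≠ q ∧ ¬ G.Adj p q := by
      by_contra hc
      push_neg at hc
      apply hnc
      ext a b
      exact ⟨fun h => h.ne, fun h => hc a b h⟩
    obtain ⟨p, q, hpq, hnadj⟩ := hpq
    -- η ≥ V - 1
    have hbig : V ≤ η + 1 := by
      set Xf := univ.filter (fun v => X v) with hXf
      set Yf := univ.filter (fun v => ¬ X v) with hYf
      have hXfc : 1 ≤ Xf.card := Finset.card_pos.mpr ⟨u, by simp [hXf, hXu]⟩
      have hYfc : 1 ≤ Yf.card := Finset.card_pos.mpr ⟨w0, by simp [hYf, hXw]⟩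
      have hsum : Xf.card + Yf.card = V := by
        rw [hXf, hYf]
        rw [Finset.card_filter_add_card_filter_not]
        simp
      have hprod : Xf.card * Yf.card ≤ η := by
        rw [← hFcard', ← Finset.card_product]
        apply Finset.card_le_card_of_injOn (fun pr => s(pr.1, pr.2))
        · rintro ⟨a, b⟩ hab
          rw [Finset.mem_coe, Finset.mem_product] at hab
          have hXa : X a := (Finset.mem_filter.mp hab.1).2
          have hXb : ¬ X b := (Finset.mem_filter.mp hab.2).2
          exact hcross a b (hall a b hXa hXb) hXa hXb
        · rintro ⟨a, b⟩ hab ⟨a', b'⟩ hab' heq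
          rw [Finset.mem_coe, Finset.mem_product] at hab hab'
          have hXa : X a := (Finset.mem_filter.mp hab.1).2
          have hXb : ¬ X b := (Finset.mem_filter.mp hab.2).2
          have hXa' : X a' := (Finset.mem_filter.mp hab'.1).2
          have hXb' : ¬ X b' := (Finset.mem_filter.mp hab'.2).2
          rcases Sym2.eq_iff.mp heq with ⟨h1, h2⟩ | ⟨h1, h2⟩
          · exact Prod.ext h1 h2
          · refine absurd ?_ hXb'
            rw [← show a = b' from h1]
            exact hXa
      nlinarith [hXfc, hYfc, hsum, hprod]
    have hb := partition_bound hV G hG.preconnected {p} {q} ⟨p, Finset.mem_singleton_self p⟩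
      ⟨q, Finset.mem_singleton_self q⟩ (Finset.disjoint_singleton.mpr hpq)
      (by intro a ha b hb
          rw [Finset.mem_singleton] at ha hb
          rw [ha, hb]; exact hnadj)
    refine le_trans hb ?_
    have hcard : (({p} ∪ {q} : Finset (Fin V))ᶜ).card = V - 2 := by
      rw [Finset.card_compl]
      have : ({p} ∪ {q} : Finset (Fin V)).card = 2 := by
        rw [Finset.card_union_of_disjoint (Finset.disjoint_singleton.mpr hpq)]
        simp
      rw [this, Fintype.card_fin]
    rw [hcard]
    have : V - 2 ≤ η := by omega
    exact_mod_cast this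
  · -- there are nonadjacent x0 ∈ X, y0 ∉ X : build a vertex cut
    push_neg at hall
    obtain ⟨x0, y0, hXx0, hXy0, hnadj⟩ := hall
    set S : Finset (Fin V) := univ.filter (fun v => (¬ X v ∧ G.Adj x0 v) ∨
      (X v ∧ v ≠ x0 ∧ ∃ b, ¬ X b ∧ G.Adj v b)) with hSdef
    have hx0S : x0 ∉ S := by
      simp only [hSdef, Finset.mem_filter, Finset.mem_univ, true_and]
      rintro (⟨h1, _⟩ | ⟨_, h2, _⟩)
      · exact h1 hXx0
      · exact h2 rfl
    have hy0S : y0 ∉ S := by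
      simp only [hSdef, Finset.mem_filter, Finset.mem_univ, true_and]
      rintro (⟨_, h2⟩ | ⟨h1, _⟩)
      · exact hnadj h2
      · exact hXy0 h1
    -- |S| ≤ η
    have hScard : S.card ≤ η := by
      rw [← hFcard']
      set ψ : Fin V → Sym2 (Fin V) := fun v =>
        if hv : X v ∧ v ≠ x0 ∧ ∃ b, ¬ X b ∧ G.Adj v b then s(v, Classical.choose hv.2.2)
        else s(x0, v) with hψdef
      apply Finset.card_le_card_of_injOn ψ
      · intro v hv
        rw [Finset.mem_coe, hSdef, Finset.mem_filter] at hv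
        by_cases hv2 : X v ∧ v ≠ x0 ∧ ∃ b, ¬ X b ∧ G.Adj v b
        · rw [hψdef]; simp only [dif_pos hv2]
          obtain ⟨hb1, hb2⟩ := Classical.choose_spec hv2.2.2
          exact hcross v _ hb2 hv2.1 hb1
        · rw [hψdef]; simp only [dif_neg hv2]
          rcases hv.2 with ⟨h1, h2⟩ | h3
          · exact hcross x0 v h2 hXx0 h1
          · exact absurd h3 hv2
      · intro v hv v' hv' heq
        rw [Finset.mem_coe, hSdef, Finset.mem_filter] at hv hv'
        by_cases hv2 : X v ∧ v ≠ x0 ∧ ∃ b, ¬ X b ∧ G.Adj v b <;>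
          by_cases hv2' : X v' ∧ v' ≠ x0 ∧ ∃ b, ¬ X b ∧ G.Adj v' b
        · rw [hψdef] at heq; simp only [dif_pos hv2, dif_pos hv2'] at heq
          obtain ⟨hb1, _⟩ := Classical.choose_spec hv2.2.2
          obtain ⟨hb1', _⟩ := Classical.choose_spec hv2'.2.2
          rcases Sym2.eq_iff.mp heq with ⟨h1, _⟩ | ⟨h1, _⟩
          · exact h1
          · exact absurd (h1 ▸ hv2.1) hb1'
        · -- v second type, v' first type
          rw [hψdef] at heq; simp only [dif_pos hv2, dif_neg hv2'] at heq
          have hv'1 : ¬ X v' := by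
            rcases hv'.2 with ⟨h1, _⟩ | h3
            · exact h1
            · exact absurd h3 hv2'
          obtain ⟨hb1, _⟩ := Classical.choose_spec hv2.2.2
          rcases Sym2.eq_iff.mp heq with ⟨h1, _⟩ | ⟨_, h2⟩
          · exact absurd h1 hv2.2.1
          · exact absurd (by rw [h2]; exact hXx0 : X _) hb1
        · -- v first type, v' second type
          rw [hψdef] at heq; simp only [dif_neg hv2, dif_pos hv2'] at heq
          have hv1 : ¬ X v := by
            rcases hv.2 with ⟨h1, _⟩ | h3
            · exact h1
            · exact absurd h3 hv2
          obtain ⟨hb1', _⟩ := Classical.choose_spec hv2'.2.2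
          rcases Sym2.eq_iff.mp heq with ⟨h1, _⟩ | ⟨_, h2⟩
          · exact absurd h1.symm hv2'.2.1
          · exact h2
        · rw [hψdef] at heq; simp only [dif_neg hv2, dif_neg hv2'] at heq
          rcases Sym2.eq_iff.mp heq with ⟨_, h2⟩ | ⟨h1, h2⟩
          · exact h2
          · -- v = v' impossible branch: x0 = v' and v = x0
            rw [h2, ← h1]
    -- the graph H obtained by removing S
    set H : SimpleGraph (Fin V) := {
      Adj := fun a b => G.Adj a b ∧ a ∉ S ∧ b ∉ S
      symm := by constructor; rintro a b ⟨h1, h2, h3⟩; exact ⟨h1.symm, h3, h2⟩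
      loopless := by constructor; rintro a ⟨h, _⟩; exact G.loopless.irrefl a h } with hHdef
    have hHS : ∀ a b, H.Adj a b → b ∉ S := fun a b h => h.2.2
    set A : Finset (Fin V) := univ.filter (fun v => H.Reachable x0 v) with hAdef
    set B : Finset (Fin V) := univ.filter (fun v => v ∉ S ∧ ¬ H.Reachable x0 v) with hBdef
    have hAS : ∀ v ∈ A, v ∉ S := by
      intro v hv
      rw [hAdef, Finset.mem_filter] at hv
      obtain ⟨w⟩ := hv.2
      rcases no_S_walk hHS w with h | h
      · exact h
      · exact h ▸ hx0S
    have hAne : A.Nonempty := ⟨x0, by rw [hAdef, Finset.mem_filter]; exact ⟨Finset.mem_univ _, SimpleGraph.Reachable.refl x0⟩⟩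
    have hBy0 : ¬ H.Reachable x0 y0 := by
      rintro ⟨w⟩
      obtain ⟨a, b, hab, hXa, hXb⟩ := cross_walk w hXx0 hXy0
      by_cases ha : a = x0
      · apply hab.2.2
        rw [hSdef, Finset.mem_filter]
        exact ⟨Finset.mem_univ _, Or.inl ⟨hXb, ha ▸ hab.1⟩⟩
      · apply hab.2.1
        rw [hSdef, Finset.mem_filter]
        exact ⟨Finset.mem_univ _, Or.inr ⟨hXa, ha, b, hXb, hab.1⟩⟩
    have hBne : B.Nonempty := ⟨y0, by
      rw [hBdef, Finset.mem_filter]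
      exact ⟨Finset.mem_univ _, hy0S, hBy0⟩⟩
    have hdisj : Disjoint A B := by
      rw [Finset.disjoint_left]
      intro v hv hv'
      rw [hAdef, Finset.mem_filter] at hv
      rw [hBdef, Finset.mem_filter] at hv'
      exact hv'.2.2 hv.2
    have hadj : ∀ a ∈ A, ∀ b ∈ B, ¬ G.Adj a b := by
      intro a ha b hb hGadj
      rw [hBdef, Finset.mem_filter] at hb
      have hHadj : H.Adj a b := ⟨hGadj, hAS a ha, hb.2.1⟩
      have : H.Reachable x0 b := by
        rw [hAdef, Finset.mem_filter] at ha
        exact ha.2.trans hHadj.reachable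
      exact hb.2.2 this
    have hb := partition_bound hV G hG.preconnected A B hAne hBne hdisj hadj
    refine le_trans hb ?_
    have hunion : A ∪ B = Sᶜ := by
      ext v
      rw [Finset.mem_union, hAdef, hBdef, Finset.mem_filter, Finset.mem_filter, Finset.mem_compl]
      constructor
      · rintro (h | h)
        · exact hAS v (by rw [hAdef, Finset.mem_filter]; exact h)
        · exact h.2.1
      · intro hv
        by_cases hr : H.Reachable x0 v
        · exact Or.inl ⟨Finset.mem_univ _, hr⟩
        · exact Or.inr ⟨Finset.mem_univ _, hv, hr⟩
    rw [hunion, compl_compl]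
    exact_mod_cast hScard
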